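/- In symmetric atomic deduction modulo a rewrite relation R, a sequent Γ ⊢ Δ is provable if and only if Γ contains an atomic proposition A and Δ contains an atomic proposition B such that A ≡ B, where ≡ is the reflexive-symmetric-transitive closure of R. -/
import Mathlib


open Relation

/--
Symmetric atomic deduction modulo a rewrite relation `R` on atomic propositions `α`.
Sequents are pairs of finite multisets of atomic propositions; `≡` is the
reflexive-symmetric-transitive closure `Relation.EqvGen R` of `R`.
The Boolean index records whether the Cut rule is allowed:
`SymDed R true Γ Δ` is provability in the full system, `SymDed R false Γ Δ`
is provability by a cut-free proof.
-/
inductive SymDed (R : α → α → Prop) : Bool → Multiset α → Multiset α → Prop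
  | ax {b : Bool} (Γ Δ : Multiset α) (A B : α)
      (h : EqvGen R A B) :
      SymDed R b (A ::ₘ Γ) (B ::ₘ Δ)
  | cut (Γ Δ : Multiset α) (C₁ C₂ : α)
      (h : EqvGen R C₁ C₂)
      (p₁ : SymDed R true Γ (C₁ ::ₘ Δ)) (p₂ : SymDed R true (C₂ ::ₘ Γ) Δ) :
      SymDed R true Γ Δ
  | contrL {b : Bool} (Γ Δ : Multiset α) (A A₁ A₂ : α)
      (h₁ : EqvGen R A A₁) (h₂ : EqvGen R A A₂)
      (p : SymDed R b (A₁ ::ₘ A₂ ::ₘ Γ) Δ) :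
      SymDed R b (A ::ₘ Γ) Δ
  | contrR {b : Bool} (Γ Δ : Multiset α) (A A₁ A₂ : α)
      (h₁ : EqvGen R A A₁) (h₂ : EqvGen R A A₂)
      (p : SymDed R b Γ (A₁ ::ₘ A₂ ::ₘ Δ)) :
      SymDed R b Γ (A ::ₘ Δ)
  | weakL {b : Bool} (Γ Δ : Multiset α) (A : α)
      (p : SymDed R b Γ Δ) :
      SymDed R b (A ::ₘ Γ) Δ
  | weakR {b : Bool} (Γ Δ : Multiset α) (A : α)
      (p : SymDed R b Γ Δ) :
      SymDed R b Γ (A ::ₘ Δ)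

/--
In symmetric atomic deduction modulo `R`, the sequent `Γ ⊢ Δ` is provable if and
only if `Γ` contains a proposition `A` and `Δ` contains a proposition `B` with `A ≡ B`.
-/
theorem symDed_aux {α : Type*} {R : α → α → Prop} {b : Bool} {Γ Δ : Multiset α}
    (h : SymDed R b Γ Δ) : ∃ A ∈ Γ, ∃ B ∈ Δ, Relation.EqvGen R A B := by
  induction h with
  | ax Γ Δ A B h =>
    exact ⟨A, Multiset.mem_cons_self _ _, B, Multiset.mem_cons_self _ _, h⟩
  | cut Γ Δ C₁ C₂ h p₁ p₂ ih₁ ih₂ =>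
    obtain ⟨A, hA, B, hB, hAB⟩ := ih₁
    rcases Multiset.mem_cons.1 hB with rfl | hB
    · obtain ⟨A', hA', B', hB', hAB'⟩ := ih₂
      rcases Multiset.mem_cons.1 hA' with rfl | hA'
      · exact ⟨A, hA, B', hB',
          Relation.EqvGen.trans _ _ _ hAB (Relation.EqvGen.trans _ _ _ h hAB')⟩
      · exact ⟨A', hA', B', hB', hAB'⟩
    · exact ⟨A, hA, B, hB, hAB⟩
  | contrL Γ Δ A A₁ A₂ h₁ h₂ p ih =>
    obtain ⟨X, hX, B, hB, hXB⟩ := ih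
    rcases Multiset.mem_cons.1 hX with rfl | hX
    · exact ⟨A, Multiset.mem_cons_self _ _, B, hB, Relation.EqvGen.trans _ _ _ h₁ hXB⟩
    rcases Multiset.mem_cons.1 hX with rfl | hX
    · exact ⟨A, Multiset.mem_cons_self _ _, B, hB, Relation.EqvGen.trans _ _ _ h₂ hXB⟩
    · exact ⟨X, Multiset.mem_cons_of_mem hX, B, hB, hXB⟩
  | contrR Γ Δ A A₁ A₂ h₁ h₂ p ih =>
    obtain ⟨X, hX, B, hB, hXB⟩ := ih
    rcases Multiset.mem_cons.1 hB with rfl | hB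
    · exact ⟨X, hX, A, Multiset.mem_cons_self _ _,
        Relation.EqvGen.trans _ _ _ hXB (Relation.EqvGen.symm _ _ h₁)⟩
    rcases Multiset.mem_cons.1 hB with rfl | hB
    · exact ⟨X, hX, A, Multiset.mem_cons_self _ _,
        Relation.EqvGen.trans _ _ _ hXB (Relation.EqvGen.symm _ _ h₂)⟩
    · exact ⟨X, hX, B, Multiset.mem_cons_of_mem hB, hXB⟩
  | weakL Γ Δ A p ih =>
    obtain ⟨X, hX, B, hB, hXB⟩ := ih
    exact ⟨X, Multiset.mem_cons_of_mem hX, B, hB, hXB⟩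
  | weakR Γ Δ A p ih =>
    obtain ⟨X, hX, B, hB, hXB⟩ := ih
    exact ⟨X, hX, B, Multiset.mem_cons_of_mem hB, hXB⟩


theorem symDed_provable_iff {α : Type*} (R : α → α → Prop) (Γ Δ : Multiset α) :
    SymDed R true Γ Δ ↔ ∃ A ∈ Γ, ∃ B ∈ Δ, Relation.EqvGen R A B := by
  constructor
  · exact symDed_aux
  · rintro ⟨A, hA, B, hB, h⟩
    obtain ⟨Γ', rfl⟩ := Multiset.exists_cons_of_mem hA
    obtain ⟨Δ', rfl⟩ := Multiset.exists_cons_of_mem hB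
    exact SymDed.ax Γ' Δ' A B h
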